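/- Fix M > 0. Let g : ℝ → ℝ be odd, nondecreasing, with g continuously differentiable and g satisfying min{α^λ, α^Λ} g(t) ≤ g(αt) for all α, t > 0 (for constants 1 < λ ≤ Λ). Then there exists a constant C = C_M > 0 such that for every a with |a| ≤ M and every b > 0, g(a) − g(a−b) ≤ C max{b, g(b)}. -/
import Mathlib


open Set Real

theorem stmt_5 (g : ℝ → ℝ) (lam Lam M : ℝ)
    (hlam : 1 < lam) (hlL : lam ≤ Lam) (hM : 0 < M)
    (hodd : ∀ t : ℝ, g (-t) = - g t) (hg0 : g 0 = 0)
    (hmono : Monotone g) (hdiff : Differentiable ℝ g)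
    (hcont : Continuous (deriv g))
    (hgrowth : ∀ α t : ℝ, 0 < α → 0 < t →
      min (α ^ lam) (α ^ Lam) * g t ≤ g (α * t) ∧
      g (α * t) ≤ max (α ^ lam) (α ^ Lam) * g t) :
    ∃ C > 0, ∀ a b : ℝ, |a| ≤ M → 0 < b →
      g a - g (a - b) ≤ C * max b (g b) := by
  obtain ⟨K, hK⟩ : ∃ K, ∀ x ∈ Icc (-(2*M)) M, deriv g x ≤ K := by
    obtain ⟨x0, -, hK⟩ := (isCompact_Icc (a := -(2*M)) (b := M)).exists_isMaxOn
      (nonempty_Icc.2 (by linarith)) hcont.continuousOn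
    exact ⟨deriv g x0, fun x hx => hK hx⟩
  have h2L : (0:ℝ) < (2:ℝ) ^ Lam := rpow_pos_of_pos two_pos Lam
  set C := max (K + 1) (1 + (2:ℝ) ^ Lam) with hC
  have hCpos : 0 < C := lt_max_of_lt_right (by linarith)
  refine ⟨C, hCpos, fun a b ha hb => ?_⟩
  have gb0 : 0 ≤ g b := by have := hmono hb.le; rwa [hg0] at this
  have hmax : b ≤ max b (g b) := le_max_left _ _
  have hmax2 : g b ≤ max b (g b) := le_max_right _ _
  rcases abs_le.1 ha with ⟨ha1, ha2⟩
  by_cases hbM : b ≤ M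
  · obtain ⟨c, hc, hder⟩ := exists_hasDerivAt_eq_slope g (deriv g)
      (show a - b < a by linarith) hdiff.continuous.continuousOn
      (fun x _ => (hdiff x).hasDerivAt)
    have hcI : c ∈ Icc (-(2*M)) M := ⟨by nlinarith [hc.1], by linarith [hc.2]⟩
    have hab : a - (a - b) = b := by ring
    rw [hab] at hder
    have key : g a - g (a - b) = deriv g c * b := by
      rw [hder]; field_simp
    have h1 : deriv g c ≤ K := hK c hcI
    have h2 : K + 1 ≤ C := le_max_left _ _
    calc g a - g (a - b) = deriv g c * b := key
      _ ≤ C * b := by nlinarith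
      _ ≤ C * max b (g b) := mul_le_mul_of_nonneg_left hmax hCpos.le
  · push_neg at hbM
    have h1 : g a ≤ g b := hmono (by linarith)
    have h3 : g (-(2*b)) ≤ g (a - b) := hmono (by linarith)
    have h4 : g (-(2*b)) = - g (2*b) := hodd (2*b)
    have h5 : g (2*b) ≤ max ((2:ℝ) ^ lam) ((2:ℝ) ^ Lam) * g b := (hgrowth 2 b two_pos hb).2
    have h6 : max ((2:ℝ) ^ lam) ((2:ℝ) ^ Lam) = (2:ℝ) ^ Lam :=
      max_eq_right ((rpow_le_rpow_left_iff one_lt_two).2 hlL)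
    rw [h6] at h5
    have hC2 : 1 + (2:ℝ) ^ Lam ≤ C := le_max_right _ _
    have hfin : C * g b ≤ C * max b (g b) := mul_le_mul_of_nonneg_left hmax2 hCpos.le
    nlinarith [mul_le_mul_of_nonneg_right hC2 gb0]
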